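/- Let P : ℂ → ℂ be a monic polynomial of degree D ≥ 2, let K_P be its filled Julia set, and let G be its Green's function. Then for every z ∈ ℂ, G(z) = 0 if and only if z ∈ K_P. -/

import Mathlib

open Filter Topology Polynomial

lemma poly_tail_bound (Q : Polynomial ℂ) (d : ℕ) (hQ : Q.natDegree ≤ d) :
    ∃ C : ℝ, 0 ≤ C ∧ ∀ w : ℂ, 1 ≤ ‖w‖ →
      ‖Q.eval w‖ ≤ C * ‖w‖ ^ d := by
  refine ⟨∑ i ∈ Finset.range (Q.natDegree + 1), ‖Q.coeff i‖,
    Finset.sum_nonneg fun i _ => norm_nonneg _, fun w hw => ?_⟩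
  rw [Polynomial.eval_eq_sum_range, Finset.sum_mul]
  refine (norm_sum_le _ _).trans (Finset.sum_le_sum fun i hi => ?_)
  rw [norm_mul, norm_pow]
  have hid : i ≤ d := le_trans (Nat.lt_succ_iff.mp (Finset.mem_range.mp hi)) hQ
  exact mul_le_mul_of_nonneg_left (pow_le_pow_right₀ hw hid) (norm_nonneg _)

lemma escape_bound (D : ℕ) (hD : 2 ≤ D) (P : Polynomial ℂ) (hmonic : P.Monic)
    (hdeg : P.natDegree = D) :
    ∃ R : ℝ, 4 ≤ R ∧ ∀ w : ℂ, R ≤ ‖w‖ →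
      ‖w‖ ^ D / 2 ≤ ‖P.eval w‖ := by
  set Q := P - Polynomial.X ^ D with hQdef
  have hQdeg : Q.natDegree ≤ D - 1 := by
    rw [Polynomial.natDegree_le_iff_coeff_eq_zero]
    intro m hm
    have hm' : D ≤ m := by omega
    rcases eq_or_lt_of_le hm' with h | h
    · have hc : P.coeff D = 1 := by
        have := hmonic.leadingCoeff
        rwa [Polynomial.leadingCoeff, hdeg] at this
      simp [hQdef, Polynomial.coeff_sub, Polynomial.coeff_X_pow, ← h, hc]
    · have hc : P.coeff m = 0 := Polynomial.coeff_eq_zero_of_natDegree_lt (by omega)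
      simp [hQdef, Polynomial.coeff_sub, Polynomial.coeff_X_pow, hc, Nat.ne_of_gt h]
  obtain ⟨C, hC0, hC⟩ := poly_tail_bound Q (D - 1) hQdeg
  refine ⟨max 4 (2 * C), le_max_left _ _, fun w hw => ?_⟩
  have hw4 : (4 : ℝ) ≤ ‖w‖ := le_trans (le_max_left _ _) hw
  have hw1 : (1 : ℝ) ≤ ‖w‖ := by linarith
  have hwC : 2 * C ≤ ‖w‖ := le_trans (le_max_right _ _) hw
  have hPe : P.eval w = w ^ D + Q.eval w := by simp [hQdef]
  have h1 : ‖w‖ ^ D - ‖Q.eval w‖ ≤ ‖P.eval w‖ := by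
    have h2 := norm_add_le (w ^ D + Q.eval w) (-Q.eval w)
    simp only [add_neg_cancel_right, map_neg, AbsoluteValue.map_neg, norm_neg] at h2
    rw [hPe]
    rw [norm_pow] at h2
    linarith
  have h3 : ‖Q.eval w‖ ≤ C * ‖w‖ ^ (D - 1) := hC w hw1
  have hpow : ‖w‖ ^ D = ‖w‖ ^ (D - 1) * ‖w‖ := by
    conv_lhs => rw [show D = (D - 1) + 1 by omega]
    rw [pow_succ]
  have hp0 : (0 : ℝ) ≤ ‖w‖ ^ (D - 1) := by positivity
  nlinarith [mul_le_mul_of_nonneg_left hwC hp0]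

/-- `G(z) = 0` if and only if `z` belongs to the filled Julia set
(the set of points with bounded forward orbit). -/
theorem green_function_zero_iff_filled_julia (D : ℕ) (hD : 2 ≤ D) (P : Polynomial ℂ)
    (hmonic : P.Monic) (hdeg : P.natDegree = D) (G : ℂ → ℝ)
    (hG : ∀ z : ℂ, Tendsto (fun n : ℕ =>
        (1 / (D : ℝ) ^ n) *
          max (Real.log (‖(fun w => P.eval w)^[n] z‖)) 0)
      atTop (𝓝 (G z))) :
    ∀ z : ℂ, G z = 0 ↔
      Bornology.IsBounded (Set.range fun n : ℕ => (fun w => P.eval w)^[n] z) := by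
  intro z
  set f : ℂ → ℂ := fun w => P.eval w with hf
  have hD2 : (2 : ℝ) ≤ (D : ℝ) := by exact_mod_cast hD
  constructor
  · -- G z = 0 → bounded
    intro hGz
    by_contra hub
    -- find an iterate with large modulus
    obtain ⟨R, hR4, hR⟩ := escape_bound D hD P hmonic hdeg
    rw [Metric.isBounded_iff_subset_closedBall 0] at hub
    push_neg at hub
    have hub' := hub R
    rw [Set.not_subset] at hub'
    obtain ⟨x, hx, hxR⟩ := hub'
    obtain ⟨N, rfl⟩ := Set.mem_range.mp hx
    have hwR : R ≤ ‖f^[N] z‖ := by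
      have : ‖f^[N] z‖ > R := by
        simpa [Metric.mem_closedBall, dist_zero_right] using hxR
      exact le_of_lt this
    set w := f^[N] z with hw
    set b : ℝ := Real.log 2 / ((D : ℝ) - 1) with hb
    have hD1 : (1 : ℝ) ≤ (D : ℝ) - 1 := by linarith
    have hb0 : 0 < b := div_pos (Real.log_pos (by norm_num)) (by linarith)
    have hbl : b ≤ Real.log 2 := by
      rw [hb, div_le_iff₀ (by linarith)]
      nlinarith [Real.log_pos (show (1:ℝ) < 2 by norm_num)]
    have hbD : (D : ℝ) * b - Real.log 2 = b := by
      have hne : (D : ℝ) - 1 ≠ 0 := by linarith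
      have h' : ((D : ℝ) - 1) * b = Real.log 2 := by rw [hb]; field_simp
      linear_combination h'
    clear_value b
    set L : ℝ := Real.log (‖w‖) with hL
    have hL4 : Real.log 4 ≤ L := Real.log_le_log (by norm_num) (le_trans hR4 hwR)
    have hlog4 : Real.log 4 = 2 * Real.log 2 := by
      rw [show (4:ℝ) = 2 ^ 2 by norm_num, Real.log_pow]
      push_cast ; ring
    have hLb : Real.log 2 ≤ L - b := by rw [hlog4] at hL4; linarith
    have hLb0 : 0 < L - b := lt_of_lt_of_le (Real.log_pos (by norm_num)) hLb
    -- inductive escape estimate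
    have key : ∀ n : ℕ, R ≤ ‖f^[n] w‖ ∧
        (D : ℝ) ^ n * (L - b) + b ≤ Real.log (‖f^[n] w‖) := by
      intro n
      induction n with
      | zero =>
        refine ⟨by simpa using hwR, ?_⟩
        simp only [Function.iterate_zero_apply, pow_zero, one_mul]
        linarith
      | succ n ih =>
        obtain ⟨h1, h2⟩ := ih
        set u := f^[n] w with hu
        have hu4 : (4 : ℝ) ≤ ‖u‖ := le_trans hR4 h1
        have hup : 0 < ‖u‖ := by linarith
        have hstep : ‖u‖ ^ D / 2 ≤ ‖f u‖ := hR u h1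
        have hpow : ‖u‖ ^ D = ‖u‖ ^ (D - 1) * ‖u‖ := by
          conv_lhs => rw [show D = (D - 1) + 1 by omega]
          rw [pow_succ]
        have h4D : (4 : ℝ) ≤ ‖u‖ ^ (D - 1) := by
          calc (4 : ℝ) = 4 ^ 1 := by norm_num
          _ ≤ (4 : ℝ) ^ (D - 1) := by
              apply pow_le_pow_right₀ (by norm_num) (by omega)
          _ ≤ ‖u‖ ^ (D - 1) := by
              apply pow_le_pow_left₀ (by norm_num) hu4
        have hbig : 2 * ‖u‖ ≤ ‖u‖ ^ D / 2 := by
          rw [hpow]; nlinarith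
        have hiter : f^[n + 1] w = f u := by
          rw [Function.iterate_succ_apply']
        constructor
        · rw [hiter] ; nlinarith
        · rw [hiter]
          have hfu0 : 0 < ‖u‖ ^ D / 2 := by positivity
          have hlog1 : Real.log (‖u‖ ^ D / 2) ≤ Real.log (‖f u‖) :=
            Real.log_le_log hfu0 hstep
          have hlog2 : Real.log (‖u‖ ^ D / 2)
              = (D : ℝ) * Real.log (‖u‖) - Real.log 2 := by
            rw [Real.log_div (by positivity) (by norm_num), Real.log_pow]
          have hmul : (D : ℝ) * ((D : ℝ) ^ n * (L - b) + b)
              ≤ (D : ℝ) * Real.log (‖u‖) :=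
            mul_le_mul_of_nonneg_left h2 (by linarith)
          have e : (D : ℝ) ^ (n + 1) * (L - b) + b
              = (D : ℝ) * ((D : ℝ) ^ n * (L - b) + b) - Real.log 2 := by
            rw [pow_succ]
            linear_combination -hbD
          rw [e]
          linarith
      -- end induction
    -- shifted limit
    have hshift : Tendsto (fun n : ℕ =>
        (1 / (D : ℝ) ^ (n + N)) *
          max (Real.log (‖f^[n + N] z‖)) 0) atTop (𝓝 (G z)) :=
      (hG z).comp (tendsto_add_atTop_nat N)
    have hGpos : (L - b) / (D : ℝ) ^ N ≤ G z := by
      apply ge_of_tendsto' hshift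
      intro n
      have hiter : f^[n + N] z = f^[n] w := by
        rw [hw, ← Function.iterate_add_apply]
      obtain ⟨_, h2⟩ := key n
      have hDn0 : (0:ℝ) < (D : ℝ) ^ n := by positivity
      have hDN0 : (0:ℝ) < (D : ℝ) ^ N := by positivity
      have hlb : (D : ℝ) ^ n * (L - b) ≤ max (Real.log (‖f^[n + N] z‖)) 0 := by
        rw [hiter]
        refine le_trans ?_ (le_max_left _ _)
        linarith
      have : (1 / (D : ℝ) ^ (n + N)) * ((D : ℝ) ^ n * (L - b))
          ≤ (1 / (D : ℝ) ^ (n + N)) * max (Real.log (‖f^[n + N] z‖)) 0 := by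
        apply mul_le_mul_of_nonneg_left hlb (by positivity)
      refine le_trans (le_of_eq ?_) this
      rw [pow_add]
      field_simp
    have : 0 < (L - b) / (D : ℝ) ^ N := by positivity
    linarith [hGz ▸ lt_of_lt_of_le this hGpos]
  · -- bounded → G z = 0
    intro hb
    obtain ⟨M, hM⟩ := (Metric.isBounded_iff_subset_closedBall 0).mp hb
    have hM' : ∀ n : ℕ, ‖f^[n] z‖ ≤ M := by
      intro n
      have := hM (Set.mem_range_self n)
      simpa [Metric.mem_closedBall, dist_zero_right] using this
    have hzero : Tendsto (fun n : ℕ =>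
        (1 / (D : ℝ) ^ n) *
          max (Real.log (‖f^[n] z‖)) 0) atTop (𝓝 0) := by
      have hupper : Tendsto (fun n : ℕ =>
          (1 / (D : ℝ) ^ n) * max (Real.log M) 0) atTop (𝓝 0) := by
        have h1 : Tendsto (fun n : ℕ => (1 / (D : ℝ)) ^ n) atTop (𝓝 0) :=
          tendsto_pow_atTop_nhds_zero_of_lt_one (by positivity) (by
            rw [div_lt_one (by linarith)] ; linarith)
        have := h1.mul_const (max (Real.log M) 0)
        simpa [one_div, zero_mul, ← inv_pow] using this
      apply tendsto_of_tendsto_of_tendsto_of_le_of_le tendsto_const_nhds hupper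
      · intro n
        positivity
      · intro n
        apply mul_le_mul_of_nonneg_left _ (by positivity)
        apply max_le _ (le_max_right _ _)
        rcases le_or_gt 1 (‖f^[n] z‖) with h | h
        · exact le_trans (Real.log_le_log (by linarith) (hM' n)) (le_max_left _ _)
        · exact le_trans (Real.log_nonpos (norm_nonneg _) (le_of_lt h))
            (le_max_right _ _)
    exact tendsto_nhds_unique (hG z) hzero
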